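/- Let V be a rational vector space of dimension at most 3 and let q be a nondegenerate symmetric bilinear form on V. Then every algebraic curvature tensor R on V (antisymmetric in the first pair and second pair of arguments, symmetric under swapping pairs, satisfying the first Bianchi identity) can be written as q ⊛ s for some symmetric bilinear form s on V, where ⊛ is the Kulkarni–Nomizu product. -/

import Mathlib

open Module

section KN

variable {V : Type*} [AddCommGroup V] [Module ℚ V]

/-- The Kulkarni–Nomizu product of two bilinear forms, as a multilinear map. -/
def kn (q s : V →ₗ[ℚ] V →ₗ[ℚ] ℚ) : MultilinearMap ℚ (fun _ : Fin 4 => V) ℚ where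
  toFun v := q (v 0) (v 2) * s (v 1) (v 3) - q (v 2) (v 1) * s (v 0) (v 3)
    - q (v 0) (v 3) * s (v 2) (v 1) + q (v 1) (v 3) * s (v 0) (v 2)
  map_update_add' := by
    intro dec v i x y
    have hdec : dec = instDecidableEqFin 4 := Subsingleton.elim _ _
    subst hdec
    fin_cases i <;> simp [Function.update] <;> ring
  map_update_smul' := by
    intro dec v i c x
    have hdec : dec = instDecidableEqFin 4 := Subsingleton.elim _ _
    subst hdec
    fin_cases i <;> simp [Function.update] <;> ring

theorem kn_apply (q s : V →ₗ[ℚ] V →ₗ[ℚ] ℚ) (x y z w : V) :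
    kn q s ![x, y, z, w] =
      q x z * s y w - q z y * s x w - q x w * s z y + q y w * s x z := by
  show q _ _ * s _ _ - q _ _ * s _ _ - q _ _ * s _ _ + q _ _ * s _ _ = _
  norm_num [Matrix.cons_val_two, Matrix.cons_val_three, Matrix.vecHead, Matrix.vecTail]

variable (q s : V →ₗ[ℚ] V →ₗ[ℚ] ℚ)

theorem kn1 (hq : ∀ x y, q x y = q y x) (hs : ∀ x y, s x y = s y x) (x y z w : V) : kn q s ![y, x, z, w] = -kn q s ![x, y, z, w] := by
  rw [kn_apply, kn_apply]
  linear_combination s x w * hq y z + s y w * hq x z - q y w * hs z x + q x w * hs y z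

theorem kn2 (hq : ∀ x y, q x y = q y x) (hs : ∀ x y, s x y = s y x) (x y z w : V) : kn q s ![x, y, w, z] = -kn q s ![x, y, z, w] := by
  rw [kn_apply, kn_apply]
  linear_combination q x w * hs y z + s x z * hq y w + q x z * hs y w + s x w * hq y z

theorem kn3 (hq : ∀ x y, q x y = q y x) (hs : ∀ x y, s x y = s y x) (x y z w : V) : kn q s ![z, w, x, y] = kn q s ![x, y, z, w] := by
  rw [kn_apply, kn_apply]
  linear_combination s w y * hq z x + q x z * hs w y + s z x * hq w y + q y w * hs z x

theorem kn00 (hq : ∀ x y, q x y = q y x) (hs : ∀ x y, s x y = s y x) (x z w : V) : kn q s ![x, x, z, w] = 0 := by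
  rw [kn_apply]
  linear_combination s x w * hq x z - q x w * hs z x

theorem knzz (hq : ∀ x y, q x y = q y x) (hs : ∀ x y, s x y = s y x) (x y z : V) : kn q s ![x, y, z, z] = 0 := by
  rw [kn_apply]
  linear_combination q x z * hs y z + s x z * hq y z

/-- Main reduction: a tensor with the curvature symmetries agreeing with a
Kulkarni–Nomizu product on all "Ricci type" basis quadruples is equal to it,
provided the dimension is at most 3. -/
theorem build (hq : ∀ x y, q x y = q y x) (hs : ∀ x y, s x y = s y x) (R : MultilinearMap ℚ (fun _ : Fin 4 => V) ℚ)
    (hR1 : ∀ x y z w : V, R ![y, x, z, w] = -R ![x, y, z, w])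
    (hR2 : ∀ x y z w : V, R ![x, y, w, z] = -R ![x, y, z, w])
    {n : ℕ} (hn : n ≤ 3) (b : Basis (Fin n) ℚ V)
    (hric : ∀ i j l, i ≠ j → i ≠ l →
      R ![b i, b j, b i, b l] = kn q s ![b i, b j, b i, b l]) :
    R = kn q s := by
  have hR00 : ∀ x z w : V, R ![x, x, z, w] = 0 := fun x z w => by
    have := hR1 x x z w; linarith
  have hRzz : ∀ x y z : V, R ![x, y, z, z] = 0 := fun x y z => by
    have := hR2 x y z z; linarith
  have main : ∀ i j k l : Fin n, R ![b i, b j, b k, b l] = kn q s ![b i, b j, b k, b l] := by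
    intro i j k l
    by_cases hij : i = j
    · subst hij; rw [hR00, kn00 q s hq hs]
    by_cases hkl : k = l
    · subst hkl; rw [hRzz, knzz q s hq hs]
    by_cases hik : i = k
    · subst hik; exact hric i j l hij fun h => hkl h
    by_cases hil : i = l
    · subst hil
      rw [hR2 (b i) (b j) (b i) (b k), hric i j k hij hik, kn2 q s hq hs (b i) (b j) (b i) (b k)]
    by_cases hjk : j = k
    · subst hjk
      rw [hR1 (b j) (b i) (b j) (b l), hric j i l (fun h => hij h.symm) (fun h => hkl h), kn1 q s hq hs (b j) (b i) (b j) (b l)]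
    by_cases hjl : j = l
    · subst hjl
      rw [hR2 (b i) (b j) (b j) (b k), hR1 (b j) (b i) (b j) (b k), neg_neg, hric j i k (fun h => hij h.symm) (fun h => hjk h),
        kn2 q s hq hs (b i) (b j) (b j) (b k), kn1 q s hq hs (b j) (b i) (b j) (b k), neg_neg]
    · exfalso
      have h1 : i.val ≠ j.val := fun h => hij (Fin.ext h)
      have h2 : i.val ≠ k.val := fun h => hik (Fin.ext h)
      have h3 : i.val ≠ l.val := fun h => hil (Fin.ext h)
      have h4 : j.val ≠ k.val := fun h => hjk (Fin.ext h)
      have h5 : j.val ≠ l.val := fun h => hjl (Fin.ext h)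
      have h6 : k.val ≠ l.val := fun h => hkl (Fin.ext h)
      have b1 := i.isLt; have b2 := j.isLt; have b3 := k.isLt; have b4 := l.isLt
      omega
  apply Basis.ext_multilinear (fun _ => b)
  intro v
  have hv : (fun i => b (v i)) = ![b (v 0), b (v 1), b (v 2), b (v 3)] := by
    funext i; fin_cases i <;> rfl
  rw [hv]
  exact main _ _ _ _

end KN

set_option maxHeartbeats 2000000 in
/-- if `dim V ≤ 3` and `q` is a nondegenerate symmetric bilinear form on `V`,
then every algebraic curvature tensor `R` on `V` is the Kulkarni–Nomizu product `q ⊛ s` of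
`q` with some symmetric bilinear form `s`. -/
theorem stmt_6 (V : Type*) [AddCommGroup V] [Module ℚ V] [FiniteDimensional ℚ V]
    (hdim : finrank ℚ V ≤ 3)
    (q : V →ₗ[ℚ] V →ₗ[ℚ] ℚ) (hqsymm : ∀ x y, q x y = q y x)
    (hqnd : ∀ v, (∀ w, q v w = 0) → v = 0)
    (R : MultilinearMap ℚ (fun _ : Fin 4 => V) ℚ)
    (hR : ∀ x y z w : V,
      R ![y, x, z, w] = -R ![x, y, z, w] ∧
      R ![x, y, w, z] = -R ![x, y, z, w] ∧
      R ![z, w, x, y] = R ![x, y, z, w] ∧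
      R ![x, y, z, w] + R ![y, z, x, w] + R ![z, x, y, w] = 0) :
    ∃ s : V →ₗ[ℚ] V →ₗ[ℚ] ℚ, (∀ x y, s x y = s y x) ∧
      ∀ x y z w : V, R ![x, y, z, w] =
        q x z * s y w - q z y * s x w - q x w * s z y + q y w * s x z := by
  classical
  have hR1 : ∀ x y z w : V, R ![y, x, z, w] = -R ![x, y, z, w] := fun x y z w => (hR x y z w).1
  have hR2 : ∀ x y z w : V, R ![x, y, w, z] = -R ![x, y, z, w] := fun x y z w => (hR x y z w).2.1
  have hR3 : ∀ x y z w : V, R ![z, w, x, y] = R ![x, y, z, w] := fun x y z w => (hR x y z w).2.2.1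
  suffices h : ∃ s : V →ₗ[ℚ] V →ₗ[ℚ] ℚ, (∀ x y, s x y = s y x) ∧ R = kn q s by
    obtain ⟨s, hssymm, hRs⟩ := h
    exact ⟨s, hssymm, fun x y z w => by rw [hRs]; exact kn_apply q s x y z w⟩
  -- get an orthogonal basis
  haveI : Invertible (2 : ℚ) := invertibleOfNonzero two_ne_zero
  have hsym : LinearMap.IsSymm q := ⟨fun x y => hqsymm x y⟩
  obtain ⟨b, hb⟩ := LinearMap.BilinForm.exists_orthogonal_basis hsym
  have horth : ∀ i j, i ≠ j → q (b i) (b j) = 0 := fun i j hij => hb hij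
  have ha : ∀ i, q (b i) (b i) ≠ 0 := by
    intro i h0
    have hz : q (b i) = 0 := by
      apply b.ext
      intro j
      by_cases hij : i = j
      · subst hij; simpa using h0
      · simpa using horth i j hij
    exact b.ne_zero i (hqnd _ fun w => by rw [hz]; rfl)
  -- abstract the dimension
  clear hb hqnd hsym hR
  revert b
  generalize finrank ℚ V = n at hdim
  intro b horth ha

  -- common facts
  have hswap : ∀ x y : V, R ![y, x, y, x] = R ![x, y, x, y] := fun x y => by
    rw [hR1 x y y x, hR2 x y x y, neg_neg]
  interval_cases n
  · -- dim 0
    exact ⟨0, by simp, build q 0 hqsymm (by simp) R hR1 hR2 (by norm_num) b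
      (fun i => i.elim0)⟩
  · -- dim 1
    refine ⟨0, by simp, build q 0 hqsymm (by simp) R hR1 hR2 (by norm_num) b ?_⟩
    intro i j l hij _
    exact absurd (Subsingleton.elim i j) hij
  · -- dim 2
    have fin2 : ∀ x : Fin 2, x = 0 ∨ x = 1 := by decide
    have fin2' : ∀ x y z : Fin 2, x ≠ y → x ≠ z → y = z := by decide
    set M : Fin 2 → Fin 2 → ℚ :=
      ![![R ![b 0, b 1, b 0, b 1] / (2 * q (b 1) (b 1)), 0],
        ![0, R ![b 0, b 1, b 0, b 1] / (2 * q (b 0) (b 0))]] with hM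
    set s : V →ₗ[ℚ] V →ₗ[ℚ] ℚ := b.constr ℚ fun i => b.constr ℚ (M i) with hsdef
    have hsb : ∀ i j, s (b i) (b j) = M i j := fun i j => by
      rw [hsdef, Basis.constr_basis, Basis.constr_basis]
    have hs : ∀ x y, s x y = s y x := by
      have he : s = s.flip := by
        apply LinearMap.ext_basis b b
        intro i j
        rw [LinearMap.flip_apply, hsb, hsb]
        rcases fin2 i with rfl | rfl <;> rcases fin2 j with rfl | rfl <;> rfl
      intro x y
      nth_rewrite 1 [he]
      rfl
    refine ⟨s, hs, build q s hqsymm hs R hR1 hR2 (by norm_num) b ?_⟩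
    intro i j l hij hil
    obtain rfl : j = l := fin2' i j l hij hil
    rw [kn_apply, horth i j hij]
    simp only [hsb, zero_mul, mul_zero, sub_zero]
    rcases fin2 i with rfl | rfl <;> rcases fin2 j with rfl | rfl
    · exact absurd rfl hij
    · rw [hM]
      norm_num
      field_simp [ha 0, ha 1]
      ring
    · rw [hswap (b 0) (b 1), hM]
      norm_num
      field_simp [ha 0, ha 1]
      ring
    · exact absurd rfl hij
  · -- dim 3
    have fin3 : ∀ x : Fin 3, x = 0 ∨ x = 1 ∨ x = 2 := by decide
    set M : Fin 3 → Fin 3 → ℚ :=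
      ![![(q (b 1) (b 1) * R ![b 0, b 2, b 0, b 2] + q (b 2) (b 2) * R ![b 0, b 1, b 0, b 1]
            - q (b 0) (b 0) * R ![b 1, b 2, b 1, b 2]) / (2 * q (b 1) (b 1) * q (b 2) (b 2)),
          R ![b 2, b 0, b 2, b 1] / q (b 2) (b 2),
          R ![b 1, b 0, b 1, b 2] / q (b 1) (b 1)],
        ![R ![b 2, b 0, b 2, b 1] / q (b 2) (b 2),
          (q (b 2) (b 2) * R ![b 0, b 1, b 0, b 1] + q (b 0) (b 0) * R ![b 1, b 2, b 1, b 2]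
            - q (b 1) (b 1) * R ![b 0, b 2, b 0, b 2]) / (2 * q (b 0) (b 0) * q (b 2) (b 2)),
          R ![b 0, b 1, b 0, b 2] / q (b 0) (b 0)],
        ![R ![b 1, b 0, b 1, b 2] / q (b 1) (b 1),
          R ![b 0, b 1, b 0, b 2] / q (b 0) (b 0),
          (q (b 0) (b 0) * R ![b 1, b 2, b 1, b 2] + q (b 1) (b 1) * R ![b 0, b 2, b 0, b 2]
            - q (b 2) (b 2) * R ![b 0, b 1, b 0, b 1]) / (2 * q (b 0) (b 0) * q (b 1) (b 1))]] with hM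
    set s : V →ₗ[ℚ] V →ₗ[ℚ] ℚ := b.constr ℚ fun i => b.constr ℚ (M i) with hsdef
    have hsb : ∀ i j, s (b i) (b j) = M i j := fun i j => by
      rw [hsdef, Basis.constr_basis, Basis.constr_basis]
    have hs : ∀ x y, s x y = s y x := by
      have he : s = s.flip := by
        apply LinearMap.ext_basis b b
        intro i j
        rw [LinearMap.flip_apply, hsb, hsb]
        rcases fin3 i with rfl | rfl | rfl <;> rcases fin3 j with rfl | rfl | rfl <;> rfl
      intro x y
      nth_rewrite 1 [he]
      rfl
    refine ⟨s, hs, build q s hqsymm hs R hR1 hR2 (by norm_num) b ?_⟩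
    intro i j l hij hil
    by_cases hjl : j = l
    · -- sectional components
      subst hjl
      rw [kn_apply, horth i j hij]
      simp only [hsb, zero_mul, mul_zero, sub_zero]
      rcases fin3 i with rfl | rfl | rfl <;> rcases fin3 j with rfl | rfl | rfl <;>
          first
            | exact absurd rfl hij
            | (rw [hM]; norm_num [Matrix.cons_val_two, Matrix.vecHead, Matrix.vecTail]; field_simp [ha 0, ha 1, ha 2]; (try ring1); done)
            | (rw [hswap, hM]; norm_num [Matrix.cons_val_two, Matrix.vecHead, Matrix.vecTail]; field_simp [ha 0, ha 1, ha 2]; (try ring1); done)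
    · -- all three indices distinct
      rw [kn_apply, horth i j hij, horth i l hil, horth j l hjl]
      simp only [hsb, zero_mul, mul_zero, sub_zero, add_zero]
      rcases fin3 i with rfl | rfl | rfl <;> rcases fin3 j with rfl | rfl | rfl <;>
          rcases fin3 l with rfl | rfl | rfl <;>
          first
            | exact absurd rfl hij
            | exact absurd rfl hil
            | exact absurd rfl hjl
            | (rw [hM]; norm_num [Matrix.cons_val_two, Matrix.vecHead, Matrix.vecTail]; field_simp [ha 0, ha 1, ha 2]; (try ring1); done)
            | (rw [hR3, hM]; norm_num [Matrix.cons_val_two, Matrix.vecHead, Matrix.vecTail]; field_simp [ha 0, ha 1, ha 2]; (try ring1); done)
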